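/- Let K be even, supported in [−2−s,2+s], with K ≥ 0 on [−2,2] (positive part K₊) and K ≤ 0 on [2,2+s]∪[−2−s,−2] (negative part K₋), K₊ nonincreasing on [0,2], and ∫₀² K₊ ≥ 1 + ∫|K₋|. Let B = {u : [−r,r] → ℝ : u = 1 on (1,r], u = −1 on [−r,−1), u odd nondecreasing}, r > 4+2s. Then u ↦ f((K∗ũ)|_{[−r,r]}) maps B into B, where f(x) = max(−1, min(1,x)). -/

import Mathlib

open MeasureTheory

/-- The saturation function `f(x) = max(−1, min(1, x))`. -/
noncomputable def sat (x : ℝ) : ℝ := max (-1) (min 1 x)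

/-- Membership in the invariant set `B`: `u = 1` on `(1, r]`, `u = −1` on `[−r, −1)`,
`u` odd and nondecreasing on `[−r, r]`. -/
def memB (r : ℝ) (u : ℝ → ℝ) : Prop :=
  (∀ x : ℝ, 1 < x → x ≤ r → u x = 1) ∧
  (∀ x : ℝ, x < -1 → -r ≤ x → u x = -1) ∧
  (∀ x ∈ Set.Icc (-r) r, u (-x) = -u x) ∧
  MonotoneOn u (Set.Icc (-r) r)

lemma sat_neg (a : ℝ) : sat (-a) = - sat a := by
  unfold sat
  rcases le_total a (-1) with h | h
  · rw [min_eq_left (by linarith : (1:ℝ) ≤ -a), min_eq_right (by linarith : a ≤ (1:ℝ)),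
      max_eq_left h, max_eq_right (by norm_num : (-1:ℝ) ≤ 1)]
    norm_num
  · rcases le_total 1 a with h' | h'
    · rw [min_eq_right (by linarith : -a ≤ (1:ℝ)), min_eq_left h',
        max_eq_left (by linarith : -a ≤ (-1:ℝ)), max_eq_right (by norm_num : (-1:ℝ) ≤ 1)]
    · rw [min_eq_right (by linarith : -a ≤ (1:ℝ)), min_eq_right h',
        max_eq_right (by linarith : (-1:ℝ) ≤ -a), max_eq_right h]

lemma sat_mono : Monotone sat :=
  fun _ _ h => max_le_max le_rfl (min_le_min le_rfl h)

lemma sat_le_one (a : ℝ) : sat a ≤ 1 :=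
  max_le (by norm_num) (min_le_left _ _)

lemma neg_one_le_sat (a : ℝ) : -1 ≤ sat a := le_max_left _ _

lemma sat_of_one_le {a : ℝ} (h : 1 ≤ a) : sat a = 1 := by
  unfold sat; rw [min_eq_left h, max_eq_right (by norm_num : (-1:ℝ) ≤ 1)]

lemma sat_of_le_neg_one {a : ℝ} (h : a ≤ -1) : sat a = -1 := by
  unfold sat; rw [min_eq_right (by linarith), max_eq_left h]

/-- Integral of an odd function over a symmetric interval vanishes. -/
lemma odd_integral_symm {f : ℝ → ℝ} (hf : ∀ t, f (-t) = - f t) (a : ℝ)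
    (hi : IntervalIntegrable f volume (-a) 0) (hi' : IntervalIntegrable f volume 0 a) :
    ∫ t in (-a)..a, f t = 0 := by
  have h2 := intervalIntegral.integral_comp_neg (a := 0) (b := a) f
  simp only [neg_zero] at h2
  have h1 : ∫ t in (-a)..(0:ℝ), f t = - ∫ t in (0:ℝ)..a, f t := by
    rw [← h2]
    simp_rw [hf]
    rw [intervalIntegral.integral_neg]
  rw [← intervalIntegral.integral_add_adjacent_intervals hi hi', h1]; ring

/-- A Chebyshev-type inequality: if `f` is nonnegative and nonincreasing on `[0,2]`,
`g` is nonincreasing on `[0,2]` with nonnegative integral, then `∫ f g ≥ 0`. -/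
lemma cheb {f g : ℝ → ℝ}
    (hf : AntitoneOn f (Set.Icc 0 2)) (hf0 : ∀ z ∈ Set.Icc (0:ℝ) 2, 0 ≤ f z)
    (hg : AntitoneOn g (Set.Icc 0 2))
    (hgi : IntegrableOn g (Set.Ioc 0 2) volume)
    (hfgi : IntegrableOn (fun z => f z * g z) (Set.Ioc 0 2) volume)
    (hgpos : 0 ≤ ∫ z in Set.Ioc (0:ℝ) 2, g z) :
    0 ≤ ∫ z in Set.Ioc (0:ℝ) 2, f z * g z := by
  set S : Set ℝ := {z ∈ Set.Icc (0:ℝ) 2 | 0 ≤ g z} with hS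
  have hSb : BddAbove (insert (0:ℝ) S) := by
    refine ⟨2, ?_⟩
    rintro z (rfl | ⟨hz, _⟩)
    · norm_num
    · exact hz.2
  set t : ℝ := sSup (insert 0 S) with ht
  have ht0 : 0 ≤ t := le_csSup hSb (Set.mem_insert _ _)
  have ht2 : t ≤ 2 := by
    refine csSup_le (Set.insert_nonempty _ _) ?_
    rintro z (rfl | ⟨hz, _⟩)
    · norm_num
    · exact hz.2
  have htI : t ∈ Set.Icc (0:ℝ) 2 := ⟨ht0, ht2⟩
  have key : ∀ z ∈ Set.Ioc (0:ℝ) 2, z ≠ t → 0 ≤ (f z - f t) * g z := by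
    intro z hz hne
    have hzI : z ∈ Set.Icc (0:ℝ) 2 := ⟨hz.1.le, hz.2⟩
    rcases lt_or_gt_of_ne hne with h | h
    · obtain ⟨w, hw, hzw⟩ := exists_lt_of_lt_csSup (Set.insert_nonempty _ _) h
      have hwS : w ∈ S := by
        rcases hw with rfl | hw
        · exact absurd hzw (by linarith [hz.1])
        · exact hw
      have hgz : 0 ≤ g z := le_trans hwS.2 (hg hzI hwS.1 hzw.le)
      have hfz : f t ≤ f z := hf hzI htI h.le
      nlinarith
    · have hzS : z ∉ S := fun hzS =>
        absurd (le_csSup hSb (Set.mem_insert_of_mem _ hzS)) (not_le.2 h)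
      have hgz : g z < 0 := by
        by_contra hc
        exact hzS ⟨hzI, not_lt.1 hc⟩
      have hfz : f z ≤ f t := hf htI hzI h.le
      nlinarith
  have hae : 0 ≤ᵐ[volume.restrict (Set.Ioc (0:ℝ) 2)] fun z => (f z - f t) * g z := by
    have h1 : ∀ᵐ z ∂(volume.restrict (Set.Ioc (0:ℝ) 2)), z ∈ Set.Ioc (0:ℝ) 2 :=
      ae_restrict_mem measurableSet_Ioc
    have h2 : ∀ᵐ (z : ℝ), z ≠ t := by
      rw [ae_iff]
      simp only [not_ne_iff, Set.setOf_eq_eq_singleton]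
      exact Real.volume_singleton
    filter_upwards [h1, ae_restrict_of_ae h2] with z hz hne using key z hz hne
  have h3 : 0 ≤ ∫ z in Set.Ioc (0:ℝ) 2, (f z - f t) * g z := integral_nonneg_of_ae hae
  have h4 : ∫ z in Set.Ioc (0:ℝ) 2, (f z - f t) * g z
      = (∫ z in Set.Ioc (0:ℝ) 2, f z * g z) - f t * ∫ z in Set.Ioc (0:ℝ) 2, g z := by
    simp_rw [sub_mul]
    rw [integral_sub hfgi (hgi.const_mul _), integral_const_mul]
  nlinarith [mul_nonneg (hf0 t htI) hgpos]

set_option maxHeartbeats 4000000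

/-- Let `K` be even, supported in `[−2−s, 2+s]`, nonnegative on `[−2,2]`
(positive part `K₊`), nonpositive on `[2,2+s] ∪ [−2−s,−2]` (negative part `K₋`), with `K₊`
nonincreasing on `[0,2]` and `∫₀² K₊ ≥ 1 + ∫|K₋|`.  With
`B = {u : [−r,r] → ℝ : u = 1 on (1,r], u = −1 on [−r,−1), u odd and nondecreasing}`
(`r > 4 + 2s`), the map `u ↦ f((K ∗ ũ)|_{[−r,r]})` maps `B` into `B`, where `f` is the
saturation function. -/
theorem invariant_set_small_inhibition
    (s : ℝ) (hs : 0 < s)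
    (r : ℝ) (hr : 4 + 2 * s < r)
    (K : ℝ → ℝ) (hKi : Integrable K volume)
    (hKeven : ∀ z, K (-z) = K z)
    (hKsupp : Function.support K ⊆ Set.Icc (-2 - s) (2 + s))
    (hKpos : ∀ z ∈ Set.Icc (-2 : ℝ) 2, 0 ≤ K z)
    (hKneg : ∀ z, z ∈ Set.Icc (2 : ℝ) (2 + s) ∪ Set.Icc (-2 - s) (-2 : ℝ) → K z ≤ 0)
    (hKmono : AntitoneOn (fun z => max (K z) 0) (Set.Icc 0 2))
    (hKmass : 1 + ∫ z, max (-K z) 0 ≤ ∫ z in Set.Ioc (0:ℝ) 2, max (K z) 0)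
    (u : ℝ → ℝ) (hum : Measurable u) (hu : memB r u) :
    memB r (fun x => sat (∫ y, K (x - y) * Set.indicator (Set.Icc (-r) r) u y)) := by
  obtain ⟨hu1, hu2, huodd, humono⟩ := hu
  have hr4 : (4:ℝ) < r := by linarith
  set I : Set ℝ := Set.Icc (-r) r with hI
  set ut : ℝ → ℝ := Set.indicator I u with hut_def
  -- basic facts about u and ut
  have h0mem : (0:ℝ) ∈ I := by
    rw [hI, Set.mem_Icc]; constructor <;> linarith
  have hrmem : r ∈ I := by rw [hI, Set.mem_Icc]; constructor <;> linarith
  have hnrmem : -r ∈ I := by rw [hI, Set.mem_Icc]; constructor <;> linarith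
  have hu0 : u 0 = 0 := by
    have h := huodd 0 h0mem
    rw [neg_zero] at h; linarith
  have hule : ∀ t ∈ I, u t ≤ 1 := by
    intro t ht
    have h := humono ht hrmem (by rw [hI, Set.mem_Icc] at ht; exact ht.2)
    rwa [hu1 r (by linarith) le_rfl] at h
  have huge : ∀ t ∈ I, -1 ≤ u t := by
    intro t ht
    have h := humono hnrmem ht (by rw [hI, Set.mem_Icc] at ht; exact ht.1)
    rwa [hu2 (-r) (by linarith) le_rfl] at h
  have hut_abs : ∀ t, |ut t| ≤ 1 := by
    intro t
    rw [hut_def]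
    by_cases h : t ∈ I
    · rw [Set.indicator_of_mem h, abs_le]
      exact ⟨huge t h, hule t h⟩
    · rw [Set.indicator_of_notMem h]; norm_num
  have hut_one : ∀ t, 1 < t → t ≤ r → ut t = 1 := by
    intro t h1 h2
    rw [hut_def, Set.indicator_of_mem (by rw [hI, Set.mem_Icc]; constructor <;> linarith),
      hu1 t h1 h2]
  have hut_nonneg : ∀ t, 0 ≤ t → 0 ≤ ut t := by
    intro t ht
    rw [hut_def]
    by_cases h : t ∈ I
    · rw [Set.indicator_of_mem h]
      calc (0:ℝ) = u 0 := hu0.symm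
        _ ≤ u t := humono h0mem h ht
    · rw [Set.indicator_of_notMem h]
  have hut_odd : ∀ t, ut (-t) = - ut t := by
    intro t
    by_cases h : t ∈ I
    · have h' : -t ∈ I := by
        rw [hI, Set.mem_Icc] at h ⊢; constructor <;> linarith [h.1, h.2]
      rw [hut_def, Set.indicator_of_mem h', Set.indicator_of_mem h, huodd t h]
    · have h' : -t ∉ I := by
        intro hc
        apply h
        rw [hI, Set.mem_Icc] at hc ⊢; constructor <;> linarith [hc.1, hc.2]
      rw [hut_def, Set.indicator_of_notMem h', Set.indicator_of_notMem h, neg_zero]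
  have hut_meas : Measurable ut := hum.indicator measurableSet_Icc
  have hut_mono : MonotoneOn ut I := by
    intro a ha b hb hab
    rw [hut_def, Set.indicator_of_mem ha, Set.indicator_of_mem hb]
    exact humono ha hb hab
  -- global integrability of ut
  have hut_glob : Integrable ut := by
    rw [hut_def]
    refine (integrable_indicator_iff measurableSet_Icc).2 ?_
    refine Measure.integrableOn_of_bounded (M := 1) (measure_Icc_lt_top).ne
      hum.aestronglyMeasurable ?_
    filter_upwards [ae_restrict_mem measurableSet_Icc] with t ht
    rw [Real.norm_eq_abs, abs_le]
    exact ⟨huge t ht, hule t ht⟩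
  -- integrability of K z * ut (x - z) and friends
  set Kp : ℝ → ℝ := fun z => max (K z) 0 with hKp_def
  set Km : ℝ → ℝ := fun z => max (-K z) 0 with hKm_def
  have hKp_int : Integrable Kp := hKi.pos_part
  have hKm_int : Integrable Km := by
    have h := hKi.neg.pos_part
    simpa [hKm_def] using h
  have hKp_nonneg : ∀ z, 0 ≤ Kp z := fun z => le_max_right _ _
  have hKp_supp : ∀ z, 2 < |z| → Kp z = 0 := by
    intro z hz
    rcases le_or_gt (K z) 0 with h | h
    · exact max_eq_right h
    · exfalso
      have hzs : z ∈ Set.Icc (-2-s) (2+s) := hKsupp (Function.mem_support.2 h.ne')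
      rw [Set.mem_Icc] at hzs
      rcases lt_or_ge z 0 with hzn | hzn
      · have h2 : z < -2 := by
          rcases abs_cases z with ⟨he, _⟩ | ⟨he, _⟩ <;> linarith
        have := hKneg z (Or.inr ⟨hzs.1, h2.le⟩)
        linarith
      · have h2 : 2 < z := by
          rcases abs_cases z with ⟨he, _⟩ | ⟨he, _⟩ <;> linarith
        have := hKneg z (Or.inl ⟨h2.le, hzs.2⟩)
        linarith
  have hKp_even : ∀ z, Kp (-z) = Kp z := fun z => by rw [hKp_def]; simp [hKeven]
  have hbdd_mul : ∀ (G : ℝ → ℝ), Integrable G → ∀ (v : ℝ → ℝ), Measurable v →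
      ∀ C : ℝ, (∀ t, |v t| ≤ C) → Integrable (fun z => G z * v z) := by
    intro G hG v hv C hvb
    have h : Integrable (fun z => v z * G z) :=
      hG.bdd_mul hv.aestronglyMeasurable (ae_of_all _ fun z => by rw [Real.norm_eq_abs]; exact hvb z)
    simpa [mul_comm] using h
  have hsubmeas : ∀ x : ℝ, Measurable (fun z => ut (x - z)) :=
    fun x => hut_meas.comp (measurable_const.sub measurable_id)
  have haddmeas : ∀ x : ℝ, Measurable (fun z => ut (x + z)) :=
    fun x => hut_meas.comp (measurable_const.add measurable_id)
  have hKint_mul : ∀ x : ℝ, Integrable (fun z => K z * ut (x - z)) :=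
    fun x => hbdd_mul K hKi _ (hsubmeas x) 1 (fun t => hut_abs _)
  have hKpu_int : ∀ x : ℝ, Integrable (fun z => Kp z * ut (x - z)) :=
    fun x => hbdd_mul Kp hKp_int _ (hsubmeas x) 1 (fun t => hut_abs _)
  have hKpu_int' : ∀ x : ℝ, Integrable (fun z => Kp z * ut (x + z)) :=
    fun x => hbdd_mul Kp hKp_int _ (haddmeas x) 1 (fun t => hut_abs _)
  -- the convolution g and its basic properties
  set g : ℝ → ℝ := fun x => ∫ y, K (x - y) * ut y with hg_def
  have hg_sub : ∀ x, g x = ∫ z, K z * ut (x - z) := by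
    intro x
    have h := MeasureTheory.integral_sub_left_eq_self (fun y => K (x - y) * ut y) volume x
    rw [hg_def]
    dsimp only
    rw [← h]
    congr 1
    ext z
    rw [sub_sub_cancel]
  have hg_odd : ∀ x, g (-x) = - g x := by
    intro x
    have h1 := MeasureTheory.integral_neg_eq_self (fun y => K (-x - y) * ut y) volume
    calc g (-x) = ∫ y, K (-x - y) * ut y := rfl
      _ = ∫ y, K (-x - -y) * ut (-y) := h1.symm
      _ = ∫ y, -(K (x - y) * ut y) := by
          congr 1
          ext y
          rw [hut_odd]
          have he : K (-x - -y) = K (x - y) := by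
            rw [show -x - -y = -(x - y) by ring, hKeven]
          rw [he]; ring
      _ = - g x := by rw [integral_neg]
  -- monotonicity of g on [-1, 1]
  have hg_mono : ∀ x₁ x₂, -1 ≤ x₁ → x₁ ≤ x₂ → x₂ ≤ 1 → g x₁ ≤ g x₂ := by
    intro x₁ x₂ h1 h12 h2
    rw [hg_sub x₁, hg_sub x₂]
    refine integral_mono (hKint_mul x₁) (hKint_mul x₂) fun z => ?_
    rcases le_or_gt (|z|) 2 with hz | hz
    · have hzz := abs_le.1 hz
      have hKz : 0 ≤ K z := hKpos z (Set.mem_Icc.2 hzz)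
      have harg : ∀ x', -1 ≤ x' → x' ≤ 1 → x' - z ∈ I := by
        intro x' ha hb
        rw [hI, Set.mem_Icc]
        constructor <;> linarith [hzz.1, hzz.2]
      have hmono := hut_mono (harg x₁ h1 (le_trans h12 h2)) (harg x₂ (le_trans h1 h12) h2)
        (by linarith)
      exact mul_le_mul_of_nonneg_left hmono hKz
    · by_cases hK0 : K z = 0
      · simp [hK0]
      · have hzs : z ∈ Set.Icc (-2-s) (2+s) := hKsupp (Function.mem_support.2 hK0)
        rw [Set.mem_Icc] at hzs
        rcases lt_or_ge z 0 with hzn | hzn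
        · have h2z : z < -2 := by
            rcases abs_cases z with ⟨he, _⟩ | ⟨he, _⟩ <;> linarith
          have e : ∀ x', -1 ≤ x' → x' ≤ 1 → ut (x' - z) = 1 := by
            intro x' ha hb
            exact hut_one _ (by linarith) (by linarith [hzs.1])
          rw [e x₁ h1 (le_trans h12 h2), e x₂ (le_trans h1 h12) h2]
        · have h2z : 2 < z := by
            rcases abs_cases z with ⟨he, _⟩ | ⟨he, _⟩ <;> linarith
          have e : ∀ x', -1 ≤ x' → x' ≤ 1 → ut (x' - z) = -1 := by
            intro x' ha hb
            rw [hut_def, Set.indicator_of_mem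
              (by rw [hI, Set.mem_Icc]; constructor <;> linarith [hzs.2])]
            exact hu2 _ (by linarith) (by linarith [hzs.2])
          rw [e x₁ h1 (le_trans h12 h2), e x₂ (le_trans h1 h12) h2]
  -- the key lower bound: g ≥ 1 on (1, r]
  have hg_one : ∀ x, 1 < x → x ≤ r → 1 ≤ g x := by
    intro x hx1 hxr
    -- Step 1: lower bound using positive and negative parts
    have hstep1 : (∫ z, Kp z * ut (x - z)) - (∫ z, Km z) ≤ g x := by
      rw [hg_sub x, ← integral_sub (hKpu_int x) hKm_int]
      refine integral_mono ((hKpu_int x).sub hKm_int) (hKint_mul x) fun z => ?_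
      have hw := abs_le.1 (hut_abs (x - z))
      simp only [hKp_def, hKm_def]
      rcases le_total (K z) 0 with h | h
      · rw [max_eq_right h, max_eq_left (by linarith)]
        nlinarith [hw.1, hw.2]
      · rw [max_eq_left h, max_eq_right (by linarith)]
        simp
    -- Step 2: fold the integral onto (0, 2]
    have hii1 : IntervalIntegrable (fun z => Kp z * ut (x - z)) volume (-2) 0 :=
      (hKpu_int x).intervalIntegrable
    have hii2 : IntervalIntegrable (fun z => Kp z * ut (x - z)) volume 0 2 :=
      (hKpu_int x).intervalIntegrable
    have hii3 : IntervalIntegrable (fun z => Kp z * ut (x + z)) volume 0 2 :=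
      (hKpu_int' x).intervalIntegrable
    have hB : (∫ z, Kp z * ut (x - z))
        = ∫ z in (0:ℝ)..2, (Kp z * ut (x - z) + Kp z * ut (x + z)) := by
      have e1 : (∫ z, Kp z * ut (x - z)) = ∫ z in Set.Icc (-2:ℝ) 2, Kp z * ut (x - z) := by
        refine (setIntegral_eq_integral_of_forall_compl_eq_zero fun z hz => ?_).symm
        rw [Set.mem_Icc] at hz
        push_neg at hz
        have habs : 2 < |z| := by
          rcases le_or_gt (-2 : ℝ) z with h | h
          · rcases abs_cases z with ⟨he, _⟩ | ⟨he, _⟩ <;> [linarith [hz h]; linarith [hz h]]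
          · rcases abs_cases z with ⟨he, _⟩ | ⟨he, _⟩ <;> linarith
        rw [hKp_supp z habs, zero_mul]
      have e2 : (∫ z in (-2:ℝ)..0, Kp z * ut (x - z)) = ∫ z in (0:ℝ)..2, Kp z * ut (x + z) := by
        have h := intervalIntegral.integral_comp_neg (a := 0) (b := 2)
          (fun z => Kp z * ut (x - z))
        simp only [neg_zero] at h
        rw [← h]
        congr 1
        ext z
        rw [hKp_even, sub_neg_eq_add]
      rw [e1, integral_Icc_eq_integral_Ioc,
        ← intervalIntegral.integral_of_le (by norm_num : (-2:ℝ) ≤ 2),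
        ← intervalIntegral.integral_add_adjacent_intervals hii1 hii2, e2,
        ← intervalIntegral.integral_add hii3 hii2]
      congr 1
      ext z
      ring
    -- Step 3: split off φ and apply Chebyshev
    set φ : ℝ → ℝ := fun z => ut (x - z) + ut (x + z) - 1 with hφ_def
    have hφ_meas : Measurable φ := ((hsubmeas x).add (haddmeas x)).sub measurable_const
    have hφ_bdd : ∀ t, |φ t| ≤ 3 := by
      intro t
      have h1 := abs_le.1 (hut_abs (x - t))
      have h2 := abs_le.1 (hut_abs (x + t))
      rw [hφ_def, abs_le]
      constructor <;> simp only <;> [linarith [h1.1, h2.1]; linarith [h1.2, h2.2]]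
    have hφ_int : IntegrableOn φ (Set.Ioc (0:ℝ) 2) := by
      refine Measure.integrableOn_of_bounded (M := 3) (measure_Ioc_lt_top).ne
        hφ_meas.aestronglyMeasurable ?_
      exact ae_of_all _ fun t => by rw [Real.norm_eq_abs]; exact hφ_bdd t
    have hKpφ_int : IntegrableOn (fun z => Kp z * φ z) (Set.Ioc (0:ℝ) 2) :=
      (hbdd_mul Kp hKp_int φ hφ_meas 3 hφ_bdd).integrableOn
    -- φ is antitone on [0,2]
    have hφ_anti : AntitoneOn φ (Set.Icc 0 2) := by
      intro z₁ hz₁ z₂ hz₂ h12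
      rw [Set.mem_Icc] at hz₁ hz₂
      have t1 : ut (x - z₂) ≤ ut (x - z₁) := by
        have m1 : x - z₂ ∈ I := by
          rw [hI, Set.mem_Icc]; constructor <;> linarith [hz₂.1, hz₂.2]
        have m2 : x - z₁ ∈ I := by
          rw [hI, Set.mem_Icc]; constructor <;> linarith [hz₁.1, hz₁.2]
        exact hut_mono m1 m2 (by linarith)
      have t2 : ut (x + z₂) ≤ ut (x + z₁) := by
        rcases le_or_gt (x + z₂) r with h | h
        · rw [hut_one (x + z₂) (by linarith [hz₂.1]) h,
            hut_one (x + z₁) (by linarith [hz₁.1]) (by linarith)]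
        · have hnm : x + z₂ ∉ I := by
            rw [hI, Set.mem_Icc]
            intro hc
            linarith [hc.2]
          rw [hut_def, Set.indicator_of_notMem hnm]
          exact hut_nonneg _ (by linarith [hz₁.1])
      simp only [hφ_def]
      linarith
    -- ∫ φ ≥ 0 over (0,2]
    have hφ_pos : 0 ≤ ∫ z in Set.Ioc (0:ℝ) 2, φ z := by
      have i1 : IntervalIntegrable (fun z => ut (x - z)) volume 0 2 :=
        (hut_glob.comp_sub_left x).intervalIntegrable
      have i2 : IntervalIntegrable (fun z => ut (x + z)) volume 0 2 :=
        (hut_glob.comp_add_left x).intervalIntegrable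
      have e : ∫ z in Set.Ioc (0:ℝ) 2, φ z = (∫ t in (x-2)..(x+2), ut t) - 2 := by
        rw [← intervalIntegral.integral_of_le (by norm_num : (0:ℝ) ≤ 2)]
        have e0 : ∫ z in (0:ℝ)..2, φ z
            = (∫ z in (0:ℝ)..2, ut (x - z)) + (∫ z in (0:ℝ)..2, ut (x + z))
              - ∫ z in (0:ℝ)..2, (1:ℝ) := by
          rw [← intervalIntegral.integral_add i1 i2,
            ← intervalIntegral.integral_sub (i1.add i2) intervalIntegrable_const]
        have e1 : ∫ z in (0:ℝ)..2, ut (x - z) = ∫ t in (x-2)..x, ut t := by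
          have h := intervalIntegral.integral_comp_sub_left (a := 0) (b := 2) ut x
          rw [h]
          norm_num
        have e2 : ∫ z in (0:ℝ)..2, ut (x + z) = ∫ t in x..(x+2), ut t := by
          have h := intervalIntegral.integral_comp_add_left (a := 0) (b := 2) ut x
          rw [h]
          norm_num
        have e3 : (∫ t in (x-2)..x, ut t) + ∫ t in x..(x+2), ut t
            = ∫ t in (x-2)..(x+2), ut t :=
          intervalIntegral.integral_add_adjacent_intervals
            hut_glob.intervalIntegrable hut_glob.intervalIntegrable
        rw [e0, e1, e2, intervalIntegral.integral_const]
        rw [show ((2:ℝ) - 0) • (1:ℝ) = 2 by norm_num]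
        linarith [e3]
      rw [e]
      -- show ∫_{x-2}^{x+2} ut ≥ 2
      set c : ℝ := |x - 2| with hc_def
      set c₁ : ℝ := max c 1 with hc₁_def
      set m : ℝ := min (x + 2) r with hm_def
      have hc0 : 0 ≤ c := abs_nonneg _
      have hxc : x - 2 ≤ c := le_abs_self _
      have hcc₁ : c ≤ c₁ := le_max_left _ _
      have h1c₁ : 1 ≤ c₁ := le_max_right _ _
      have hc₁m : c₁ ≤ m := by
        rw [hc₁_def, hm_def]
        rcases abs_cases (x - 2) with ⟨he, _⟩ | ⟨he, _⟩ <;>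
          · rw [hc_def, he]
            refine max_le (le_min (by linarith) (by linarith)) (le_min (by linarith) (by linarith))
      have hmx : m ≤ x + 2 := min_le_left _ _
      have p1 : ∫ t in (x-2)..c, ut t = 0 := by
        rcases le_or_gt 2 x with h | h
        · rw [hc_def, abs_of_nonneg (by linarith)]
          exact intervalIntegral.integral_same
        · have h0 : ∫ t in (-(2 - x))..(2 - x), ut t = 0 :=
            odd_integral_symm hut_odd (2 - x) hut_glob.intervalIntegrable
              hut_glob.intervalIntegrable
          rw [hc_def, abs_of_neg (by linarith : x - 2 < 0)]
          rw [show -(x - 2) = 2 - x by ring]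
          rw [show x - 2 = -(2 - x) by ring]
          exact h0
      have p2 : 0 ≤ ∫ t in c..c₁, ut t := by
        rw [intervalIntegral.integral_of_le hcc₁]
        refine setIntegral_nonneg measurableSet_Ioc fun t ht => ?_
        exact hut_nonneg t (le_trans hc0 ht.1.le)
      have p3 : ∫ t in c₁..m, ut t = m - c₁ := by
        rw [intervalIntegral.integral_of_le hc₁m,
          setIntegral_congr_fun measurableSet_Ioc
            (g := fun _ => (1:ℝ)) (fun t ht =>
              hut_one t (lt_of_le_of_lt h1c₁ ht.1) (le_trans ht.2 (min_le_right _ _))),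
          setIntegral_const, Real.volume_real_Ioc_of_le hc₁m, smul_eq_mul,
          mul_one]
      have p4 : 0 ≤ ∫ t in m..(x+2), ut t := by
        rw [intervalIntegral.integral_of_le hmx]
        refine setIntegral_nonneg measurableSet_Ioc fun t ht => ?_
        exact hut_nonneg t (le_trans (by linarith) ht.1.le)
      have hm2 : 2 ≤ m - c₁ := by
        rcases le_or_gt c 1 with h | h
        · rw [hc₁_def, max_eq_right h]
          have h3 : 3 ≤ m := le_min (by linarith) (by linarith)
          linarith
        · rw [hc₁_def, max_eq_left h.le]
          have hx3 : 3 < x := by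
            rcases abs_cases (x - 2) with ⟨he, _⟩ | ⟨he, _⟩
            · rw [hc_def, he] at h; linarith
            · rw [hc_def, he] at h; linarith
          rw [hc_def, abs_of_nonneg (by linarith)]
          have hxm : x ≤ m := le_min (by linarith) hxr
          linarith
      have hsplit : ∫ t in (x-2)..(x+2), ut t
          = (∫ t in (x-2)..c, ut t) + ((∫ t in c..c₁, ut t)
            + ((∫ t in c₁..m, ut t) + ∫ t in m..(x+2), ut t)) := by
        rw [intervalIntegral.integral_add_adjacent_intervals
            hut_glob.intervalIntegrable hut_glob.intervalIntegrable,
          intervalIntegral.integral_add_adjacent_intervals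
            hut_glob.intervalIntegrable hut_glob.intervalIntegrable,
          intervalIntegral.integral_add_adjacent_intervals
            hut_glob.intervalIntegrable hut_glob.intervalIntegrable]
      rw [hsplit]
      linarith [p1, p2, p3, p4, hm2]
    have hCheb : 0 ≤ ∫ z in Set.Ioc (0:ℝ) 2, Kp z * φ z :=
      cheb hKmono (fun z _ => hKp_nonneg z) hφ_anti hφ_int hKpφ_int hφ_pos
    -- Step 4: assemble
    have hC1 : (∫ z in (0:ℝ)..2, (Kp z * ut (x - z) + Kp z * ut (x + z)))
        = (∫ z in Set.Ioc (0:ℝ) 2, Kp z * φ z) + ∫ z in Set.Ioc (0:ℝ) 2, Kp z := by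
      rw [intervalIntegral.integral_of_le (by norm_num : (0:ℝ) ≤ 2),
        ← integral_add hKpφ_int hKp_int.integrableOn]
      congr 1
      ext z
      simp only [hφ_def]
      ring
    have hmass : 1 + (∫ z, Km z) ≤ ∫ z in Set.Ioc (0:ℝ) 2, Kp z := hKmass
    rw [hB, hC1] at hstep1
    linarith
  -- now assemble the four properties of memB
  have hone : ∀ x, 1 < x → x ≤ r → sat (g x) = 1 :=
    fun x h1 h2 => sat_of_one_le (hg_one x h1 h2)
  have hnegone : ∀ x, x < -1 → -r ≤ x → sat (g x) = -1 := by
    intro x h1 h2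
    have h3 := hg_one (-x) (by linarith) (by linarith)
    have h4 : g x ≤ -1 := by
      have h5 := hg_odd x
      linarith
    exact sat_of_le_neg_one h4
  refine ⟨hone, hnegone, ?_, ?_⟩
  · intro x _
    show sat (g (-x)) = - sat (g x)
    rw [hg_odd x, sat_neg]
  · intro x₁ hx₁ x₂ hx₂ h12
    show sat (g x₁) ≤ sat (g x₂)
    rcases lt_or_ge x₁ (-1) with h | h
    · rw [hnegone x₁ h hx₁.1]
      exact neg_one_le_sat _
    · rcases lt_or_ge 1 x₂ with h2 | h2
      · rw [hone x₂ h2 hx₂.2]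
        exact sat_le_one _
      · exact sat_mono (hg_mono x₁ x₂ h h12 h2)
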